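/- Let A, B be unital C*-algebras, φ : A → B a positive unital map, τ a tracial state on B, f a convex function on an open interval I, and g an increasing convex continuous function on an open interval J with f(I) ⊆ J. Then for every self-adjoint a ∈ A with spectrum in I, τ(g(f(φ(a)))) ≤ τ(g(φ(f(a)))). -/

import Mathlib

open scoped ComplexOrder

lemma cl_eq_one {r : ℝ} (hr : 1 ≤ r) : max 0 (min 1 r) = 1 := by
  rw [min_eq_left hr]; simp

lemma cl_eq_zero {r : ℝ} (hr : r ≤ 0) : max 0 (min 1 r) = 0 :=
  max_eq_left (le_trans (min_le_right _ _) hr)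

/-- ramp at level `i` for the partition of unity. -/
noncomputable def hatR (m w : ℝ) (n i : ℕ) (t : ℝ) : ℝ :=
  if i = 0 then 1 else if n < i then 0
  else max 0 (min 1 ((t - m - ((i : ℝ) - 1) * w) / w))

/-- hat functions forming a partition of unity. -/
noncomputable def hatE (m w : ℝ) (n i : ℕ) (t : ℝ) : ℝ :=
  hatR m w n i t - hatR m w n (i + 1) t

lemma hatR_continuous (m w : ℝ) (n i : ℕ) : Continuous (fun t => hatR m w n i t) := by
  unfold hatR
  rcases eq_or_ne i 0 with rfl | h0
  · simp only [if_pos rfl, if_true]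
    exact continuous_const
  · rcases lt_or_ge n i with h | h
    · simp only [if_neg h0, if_pos h]; fun_prop
    · simp only [if_neg h0, if_neg (not_lt.mpr h)]; fun_prop
lemma hatR_succ_le (m w : ℝ) (hw : 0 < w) (n i : ℕ) (t : ℝ) :
    hatR m w n (i + 1) t ≤ hatR m w n i t := by
  unfold hatR
  rcases eq_or_ne i 0 with rfl | h0
  · rw [if_pos rfl]; split_ifs <;> simp
  · rw [if_neg h0, if_neg (by omega : ¬ i + 1 = 0)]
    rcases lt_or_ge n i with h | h
    · rw [if_pos h, if_pos (by omega)]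
    · rw [if_neg (not_lt.mpr h)]
      rcases lt_or_ge n (i + 1) with h2 | h2
      · rw [if_pos h2]; simp
      · rw [if_neg (not_lt.mpr h2)]
        refine max_le_max le_rfl (min_le_min le_rfl ?_)
        rw [div_le_div_iff_of_pos_right hw]
        push_cast; nlinarith [hw]

lemma hatE_nonneg (m w : ℝ) (hw : 0 < w) (n i : ℕ) (t : ℝ) : 0 ≤ hatE m w n i t :=
  sub_nonneg.mpr (hatR_succ_le m w hw n i t)
lemma hatE_continuous (m w : ℝ) (n i : ℕ) : Continuous (fun t => hatE m w n i t) :=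
  (hatR_continuous m w n i).sub (hatR_continuous m w n (i + 1))
lemma hatE_sum (m w : ℝ) (n : ℕ) (t : ℝ) :
    ∑ i ∈ Finset.range (n + 1), hatE m w n i t = 1 := by
  unfold hatE
  rw [Finset.sum_range_sub' (fun i => hatR m w n i t) (n + 1)]
  unfold hatR
  rw [if_pos rfl, if_neg (Nat.succ_ne_zero n), if_pos (Nat.lt_succ_self n)]
  simp
lemma hatE_support (m w : ℝ) (hw : 0 < w) (n : ℕ) (hn : 1 ≤ n) (i : ℕ) (hi : i ≤ n) (t : ℝ)
    (h1 : m ≤ t) (h2 : t ≤ m + n * w) (h : hatE m w n i t ≠ 0) :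
    |t - (m + i * w)| ≤ w := by
  unfold hatE hatR at h
  by_contra hcon
  rw [abs_le, not_and_or, not_le, not_le] at hcon
  apply h; clear h
  rcases eq_or_ne i 0 with rfl | h0
  · -- i = 0 : t - m ≤ w must fail only above
    have ht : m + w < t := by
      rcases hcon with h' | h'
      · exfalso; push_cast at h'; linarith
      · push_cast at h'; linarith
    rw [if_pos rfl, if_neg (Nat.succ_ne_zero 0), if_neg (by omega : ¬ n < 0 + 1)]
    rw [cl_eq_one ?_]
    · ring
    · rw [le_div_iff₀ hw]; push_cast; linarith
  · rw [if_neg h0, if_neg (by omega : ¬ i + 1 = 0), if_neg (by omega : ¬ n < i)]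
    rcases lt_or_ge n (i + 1) with htop | hmid
    · -- i = n
      have hin : i = n := by omega
      subst hin
      have ht : t < m + i * w - w := by
        rcases hcon with h' | h'
        · linarith
        · exfalso; linarith
      rw [if_pos htop, cl_eq_zero ?_]
      · ring
      · rw [div_nonpos_iff]
        exact Or.inr ⟨by push_cast; nlinarith, hw.le⟩
    · rw [if_neg (not_lt.mpr hmid)]
      have harg : (t - m - (((i + 1 : ℕ) : ℝ) - 1) * w) / w
          = (t - m - ((i : ℝ) - 1) * w) / w - 1 := by
        push_cast; field_simp; ring
      rw [harg]
      set x := (t - m - ((i : ℝ) - 1) * w) / w with hxdef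
      rcases hcon with h' | h'
      · -- t below t_i - w :  x ≤ 0
        have hx : x ≤ 0 := by
          rw [hxdef, div_nonpos_iff]
          exact Or.inr ⟨by nlinarith, hw.le⟩
        rw [cl_eq_zero hx, cl_eq_zero (by linarith)]; ring
      · -- t above t_i + w : x - 1 ≥ 1
        have hx : 2 ≤ x := by
          rw [hxdef, le_div_iff₀ hw]; nlinarith
        rw [cl_eq_one (by linarith), cl_eq_one (by linarith)]; ring

lemma exists_subgradient {K : Set ℝ} (hK : IsOpen K) {k : ℝ → ℝ} (hk : ConvexOn ℝ K k)
    {s : ℝ} (hs : s ∈ K) : ∃ c : ℝ, ∀ t ∈ K, k s + c * (t - s) ≤ k t := by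
  obtain ⟨ε, hε, hball⟩ := Metric.isOpen_iff.mp hK s hs
  have ht₀ : s - ε/2 ∈ K := hball (by
    rw [Metric.mem_ball, Real.dist_eq, show s - ε/2 - s = -(ε/2) by ring, abs_neg,
      abs_of_pos (by linarith)]; linarith)
  have ht₁ : s + ε/2 ∈ K := hball (by
    rw [Metric.mem_ball, Real.dist_eq, show s + ε/2 - s = ε/2 by ring,
      abs_of_pos (by linarith)]; linarith)
  set S : Set ℝ := (fun t => (k s - k t)/(s - t)) '' (K ∩ Set.Iio s) with hS
  have hne : S.Nonempty :=
    ⟨_, Set.mem_image_of_mem _ (⟨ht₀, show s - ε/2 < s by linarith⟩ : _ ∈ K ∩ Set.Iio s)⟩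
  have hbdd : BddAbove S := by
    refine ⟨(k (s + ε/2) - k s)/(s + ε/2 - s), ?_⟩
    rintro r ⟨t, ⟨htK, htlt⟩, rfl⟩
    exact hk.slope_mono_adjacent htK ht₁ htlt (by linarith)
  refine ⟨sSup S, fun t htK => ?_⟩
  rcases lt_trichotomy t s with h | h | h
  · have hle : (k s - k t)/(s - t) ≤ sSup S := le_csSup hbdd ⟨t, ⟨htK, h⟩, rfl⟩
    rw [div_le_iff₀ (by linarith)] at hle
    nlinarith [hle]
  · simp [h]
  · have hle : sSup S ≤ (k t - k s)/(t - s) := by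
      refine csSup_le hne ?_
      rintro r ⟨t', ⟨ht'K, ht'lt⟩, rfl⟩
      exact hk.slope_mono_adjacent ht'K htK ht'lt h
    rw [le_div_iff₀ (by linarith)] at hle
    nlinarith [hle]

lemma jensen_state {D : Type*} [CStarAlgebra D] [PartialOrder D] [StarOrderedRing D]
    (ν : D →ₗ[ℂ] ℂ) (hν_pos : ∀ x : D, 0 ≤ x → 0 ≤ ν x) (hν_unital : ν 1 = 1)
    {K : Set ℝ} (hK_open : IsOpen K) (hK_conn : K.OrdConnected)
    {k : ℝ → ℝ} (hk : ConvexOn ℝ K k) (hk_cont : ContinuousOn k K)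
    {x : D} (hx : IsSelfAdjoint x) {p q : ℝ} (hp : p ∈ K) (hq : q ∈ K)
    (hspec : spectrum ℝ x ⊆ Set.Icc p q) :
    (ν x).re ∈ Set.Icc p q ∧ k ((ν x).re) ≤ (ν (cfc k x)).re := by
  have hIcc : Set.Icc p q ⊆ K := hK_conn.out hp hq
  have hmono : ∀ {y z : D}, y ≤ z → (ν y).re ≤ (ν z).re := by
    intro y z h
    have h0 : (0 : ℂ) ≤ ν (z - y) := hν_pos _ (sub_nonneg.mpr h)
    rw [map_sub] at h0
    have := (Complex.le_def.mp h0).1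
    simpa using this
  have hνalg : ∀ r : ℝ, ν (algebraMap ℝ D r) = (r : ℂ) := by
    intro r
    rw [Algebra.algebraMap_eq_smul_one, ← algebraMap_smul ℂ r (1 : D), map_smul]
    simp [hν_unital, Algebra.algebraMap_eq_smul_one]
  have hle : x ≤ algebraMap ℝ D q :=
    le_algebraMap_of_spectrum_le (fun r hr => (hspec hr).2)
  have hge : algebraMap ℝ D p ≤ x :=
    (algebraMap_le_iff_le_spectrum hx).mpr (fun r hr => (hspec hr).1)
  have hs_mem : (ν x).re ∈ Set.Icc p q := by
    constructor
    · have := hmono hge; rwa [hνalg, Complex.ofReal_re] at this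
    · have := hmono hle; rwa [hνalg, Complex.ofReal_re] at this
  refine ⟨hs_mem, ?_⟩
  set s : ℝ := (ν x).re with hs_def
  obtain ⟨c, hc⟩ := exists_subgradient hK_open hk (hIcc hs_mem)
  have hcont_aff : ContinuousOn (fun t : ℝ => k s + c * (t - s)) (spectrum ℝ x) := by
    fun_prop
  have hcfc_le : cfc (fun t : ℝ => k s + c * (t - s)) x ≤ cfc k x := by
    refine cfc_mono (fun t ht => hc t (hIcc (hspec ht))) hcont_aff
      (hk_cont.mono (hspec.trans hIcc))
  have haff : cfc (fun t : ℝ => k s + c * (t - s)) x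
      = algebraMap ℝ D (k s - c * s) + c • x := by
    calc cfc (fun t : ℝ => k s + c * (t - s)) x
        = cfc (fun t : ℝ => (fun _ => k s - c * s) t + (fun t => c * t) t) x := by
          congr 1; ext t; ring
      _ = algebraMap ℝ D (k s - c * s) + c • x := by
          rw [cfc_add x _ _ (by fun_prop) (by fun_prop), cfc_const _ _ hx,
            cfc_const_mul_id c x hx]
  have : (ν (cfc (fun t : ℝ => k s + c * (t - s)) x)).re = k s := by
    rw [haff, map_add, hνalg, ← algebraMap_smul ℂ c x, map_smul]
    simp [smul_eq_mul, Complex.ofReal_re, ← hs_def]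
  calc k s = (ν (cfc (fun t : ℝ => k s + c * (t - s)) x)).re := this.symm
    _ ≤ (ν (cfc k x)).re := hmono hcfc_le

lemma real_mul_nonneg {r : ℝ} (hr : 0 ≤ r) {z : ℂ} (hz : 0 ≤ z) : 0 ≤ (r : ℂ) * z := by
  rw [Complex.le_def] at hz ⊢
  constructor
  · rw [Complex.zero_re, Complex.re_ofReal_mul]
    exact mul_nonneg hr (by simpa using hz.1)
  · rw [Complex.zero_im, Complex.im_ofReal_mul, ← hz.2, Complex.zero_im, mul_zero]

lemma unif_eps {S : Set ℝ} (hS : IsCompact S) {k : ℝ → ℝ} (hk : ContinuousOn k S) {δ : ℝ}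
    (hδ : 0 < δ) : ∃ ε > 0, ∀ u ∈ S, ∀ v ∈ S, |u - v| ≤ ε → |k u - k v| ≤ δ := by
  have h := hS.uniformContinuousOn_of_continuous hk
  rw [Metric.uniformContinuousOn_iff_le] at h
  obtain ⟨ε, hε, h⟩ := h δ hδ
  refine ⟨ε/2, by linarith, fun u hu v hv huv => ?_⟩
  have := h u hu v hv (by rw [Real.dist_eq]; linarith)
  rwa [Real.dist_eq] at this

set_option maxHeartbeats 2000000 in
/-- Let `φ : A → B` be a positive unital map of unital C*-algebras, `τ` a tracial state
on `B`, `f` convex on an open interval `I`, and `g` an increasing convex continuous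
function on an open interval `J` with `f(I) ⊆ J`.  Then for every selfadjoint `a ∈ A`
with spectrum in `I`, `τ(g(f(φ(a)))) ≤ τ(g(φ(f(a))))`. -/
theorem jensen_tracial_state {A B : Type*}
    [CStarAlgebra A] [PartialOrder A] [StarOrderedRing A]
    [CStarAlgebra B] [PartialOrder B] [StarOrderedRing B]
    (φ : A →ₗ[ℂ] B) (hφ_pos : ∀ x : A, 0 ≤ x → 0 ≤ φ x) (hφ_unital : φ 1 = 1)
    (τ : B →ₗ[ℂ] ℂ) (hτ_pos : ∀ x : B, 0 ≤ x → 0 ≤ τ x) (hτ_unital : τ 1 = 1)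
    (hτ_tracial : ∀ x y : B, τ (x * y) = τ (y * x))
    (I J : Set ℝ) (hI_open : IsOpen I) (hI_conn : I.OrdConnected)
    (hJ_open : IsOpen J) (hJ_conn : J.OrdConnected)
    (f g : ℝ → ℝ) (hf : ConvexOn ℝ I f)
    (hg_conv : ConvexOn ℝ J g) (hg_mono : MonotoneOn g J) (hg_cont : ContinuousOn g J)
    (hfI : f '' I ⊆ J)
    (a : A) (ha : IsSelfAdjoint a) (hspec : spectrum ℝ a ⊆ I) :
    (τ (cfc g (cfc f (φ a)))).re ≤ (τ (cfc g (φ (cfc f a)))).re := by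
  classical
  rcases subsingleton_or_nontrivial B with hBtriv | hBnontriv
  · exact le_of_eq (congrArg (fun z : ℂ => z.re) (congrArg τ (Subsingleton.elim _ _)))
  have hAnontriv : Nontrivial A := by
    by_contra h
    rw [not_nontrivial_iff_subsingleton] at h
    exact one_ne_zero (show (1 : B) = 0 by rw [← hφ_unital, Subsingleton.elim (1 : A) 0, map_zero])
  -- basic facts about τ
  have hτ_mono : ∀ {x y : B}, x ≤ y → (τ x).re ≤ (τ y).re := by
    intro x y h
    have h0 : (0 : ℂ) ≤ τ (y - x) := hτ_pos _ (sub_nonneg.mpr h)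
    rw [map_sub] at h0
    have := (Complex.le_def.mp h0).1
    simp only [Complex.zero_re, Complex.sub_re] at this
    linarith
  have hτ_real_smul : ∀ (r : ℝ) (x : B), τ (r • x) = (r : ℂ) * τ x := by
    intro r x
    rw [← algebraMap_smul ℂ r x, map_smul, smul_eq_mul, Complex.coe_algebraMap]
  -- spectrum of `a`
  have hσa_cpct : IsCompact (spectrum ℝ a) := isCompact_iff_compactSpace.mpr inferInstance
  have hσa_ne : (spectrum ℝ a).Nonempty := ha.spectrum_nonempty
  obtain ⟨m, hmσ, hm_min⟩ := hσa_cpct.exists_isMinOn hσa_ne continuousOn_id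
  obtain ⟨M, hMσ, hM_max⟩ := hσa_cpct.exists_isMaxOn hσa_ne continuousOn_id
  rw [isMinOn_iff] at hm_min
  rw [isMaxOn_iff] at hM_max
  obtain ⟨rm, hrm, hrm_ball⟩ := Metric.isOpen_iff.mp hI_open m (hspec hmσ)
  obtain ⟨rM, hrM, hrM_ball⟩ := Metric.isOpen_iff.mp hI_open M (hspec hMσ)
  set m' : ℝ := m - rm/2 with hm'_def
  set M' : ℝ := M + rM/2 with hM'_def
  have hm'I : m' ∈ I := hrm_ball (by
    rw [Metric.mem_ball, Real.dist_eq, hm'_def, show m - rm/2 - m = -(rm/2) by ring, abs_neg,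
      abs_of_pos (by linarith)]; linarith)
  have hM'I : M' ∈ I := hrM_ball (by
    rw [Metric.mem_ball, Real.dist_eq, hM'_def, show M + rM/2 - M = rM/2 by ring,
      abs_of_pos (by linarith)]; linarith)
  have hmM : m ≤ M := hM_max m hmσ
  have hm'M' : m' < M' := by rw [hm'_def, hM'_def]; linarith
  have hIccI : Set.Icc m' M' ⊆ I := hI_conn.out hm'I hM'I
  have hσa_sub : spectrum ℝ a ⊆ Set.Icc m' M' := fun t ht =>
    ⟨by have := hm_min t ht; simp only [id] at this; rw [hm'_def]; linarith,
     by have := hM_max t ht; simp only [id] at this; rw [hM'_def]; linarith⟩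
  -- φ facts
  have hφ_mono : ∀ {x y : A}, x ≤ y → φ x ≤ φ y := by
    intro x y h
    have := hφ_pos _ (sub_nonneg.mpr h)
    rw [map_sub] at this
    exact sub_nonneg.mp this
  have hφ_alg : ∀ r : ℝ, φ (algebraMap ℝ A r) = algebraMap ℝ B r := by
    intro r
    rw [Algebra.algebraMap_eq_smul_one, ← algebraMap_smul ℂ r (1 : A), map_smul, hφ_unital,
      algebraMap_smul, ← Algebra.algebraMap_eq_smul_one]
  -- the element b = φ a
  have ha_le : a ≤ algebraMap ℝ A M' := le_algebraMap_of_spectrum_le (R := ℝ) (fun r hr => (hσa_sub hr).2)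
  have ha_ge : algebraMap ℝ A m' ≤ a :=
    (algebraMap_le_iff_le_spectrum ha).mpr (fun r hr => (hσa_sub hr).1)
  set b : B := φ a with hb_def
  have hb_le : b ≤ algebraMap ℝ B M' := by rw [hb_def, ← hφ_alg]; exact hφ_mono ha_le
  have hb_ge : algebraMap ℝ B m' ≤ b := by rw [hb_def, ← hφ_alg]; exact hφ_mono ha_ge
  have hb_sa : IsSelfAdjoint b := by
    have h1 : IsSelfAdjoint (b - algebraMap ℝ B m') := .of_nonneg (sub_nonneg.mpr hb_ge)
    have h2 : IsSelfAdjoint (algebraMap ℝ B m') := IsSelfAdjoint.algebraMap B (.all m')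
    simpa using h1.add h2
  have hσb : spectrum ℝ b ⊆ Set.Icc m' M' := fun t ht =>
    ⟨(algebraMap_le_iff_le_spectrum hb_sa).mp hb_ge t ht,
     (le_algebraMap_iff_spectrum_le hb_sa).mp hb_le t ht⟩
  -- f side
  have hf_cont : ContinuousOn f I := hf.continuousOn hI_open
  have hf_contIcc : ContinuousOn f (Set.Icc m' M') := hf_cont.mono hIccI
  obtain ⟨tp, htp, htp_min⟩ := isCompact_Icc.exists_isMinOn (Set.nonempty_Icc.mpr hm'M'.le)
    hf_contIcc
  obtain ⟨tq, htq, htq_max⟩ := isCompact_Icc.exists_isMaxOn (Set.nonempty_Icc.mpr hm'M'.le)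
    hf_contIcc
  rw [isMinOn_iff] at htp_min
  rw [isMaxOn_iff] at htq_max
  set p : ℝ := f tp with hp_def
  set q : ℝ := f tq with hq_def
  have hpJ : p ∈ J := hfI ⟨tp, hIccI htp, rfl⟩
  have hqJ : q ∈ J := hfI ⟨tq, hIccI htq, rfl⟩
  have hIccJ : Set.Icc p q ⊆ J := hJ_conn.out hpJ hqJ
  have hf_mem : ∀ t ∈ Set.Icc m' M', f t ∈ Set.Icc p q := fun t ht =>
    ⟨htp_min t ht, htq_max t ht⟩
  set x₁ : A := cfc f a with hx₁_def
  have hfσa : ContinuousOn f (spectrum ℝ a) := hf_cont.mono (hspec)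
  have hx₁_sa : IsSelfAdjoint x₁ := cfc_predicate f a
  have hσx₁ : spectrum ℝ x₁ = f '' spectrum ℝ a := cfc_map_spectrum f a ha hfσa
  have hσx₁_sub : spectrum ℝ x₁ ⊆ Set.Icc p q := by
    rw [hσx₁]
    rintro r ⟨t, ht, rfl⟩
    exact hf_mem t (hσa_sub ht)
  have hx₁_le : x₁ ≤ algebraMap ℝ A q := le_algebraMap_of_spectrum_le (R := ℝ)
    (fun r hr => (hσx₁_sub hr).2)
  have hx₁_ge : algebraMap ℝ A p ≤ x₁ :=
    (algebraMap_le_iff_le_spectrum hx₁_sa).mpr (fun r hr => (hσx₁_sub hr).1)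
  set c : B := φ x₁ with hc_def
  have hc_le : c ≤ algebraMap ℝ B q := by rw [hc_def, ← hφ_alg]; exact hφ_mono hx₁_le
  have hc_ge : algebraMap ℝ B p ≤ c := by rw [hc_def, ← hφ_alg]; exact hφ_mono hx₁_ge
  have hc_sa : IsSelfAdjoint c := by
    have h1 : IsSelfAdjoint (c - algebraMap ℝ B p) := .of_nonneg (sub_nonneg.mpr hc_ge)
    have h2 : IsSelfAdjoint (algebraMap ℝ B p) := IsSelfAdjoint.algebraMap B (.all p)
    simpa using h1.add h2
  have hσc : spectrum ℝ c ⊆ Set.Icc p q := fun t ht =>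
    ⟨(algebraMap_le_iff_le_spectrum hc_sa).mp hc_ge t ht,
     (le_algebraMap_iff_spectrum_le hc_sa).mp hc_le t ht⟩
  have hg_contσc : ContinuousOn g (spectrum ℝ c) := hg_cont.mono (hσc.trans hIccJ)
  set G : B := cfc g c with hG_def
  have hG_sa : IsSelfAdjoint G := cfc_predicate g c
  -- rewrite the LHS via composition
  have hfσb : ContinuousOn f (spectrum ℝ b) := hf_cont.mono (hσb.trans hIccI)
  have hgfσb : ContinuousOn g (f '' spectrum ℝ b) := by
    apply hg_cont.mono
    rintro r ⟨t, ht, rfl⟩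
    exact hIccJ (hf_mem t (hσb ht))
  have hcomp : cfc g (cfc f b) = cfc (fun t => g (f t)) b := by
    rw [← cfc_comp g f b hb_sa hgfσb hfσb]; rfl
  rw [hcomp]
  -- the key estimate with arbitrary δ
  have key : ∀ δ : ℝ, 0 < δ → (τ (cfc (fun t => g (f t)) b)).re ≤ (τ G).re + 2*δ := by
    intro δ hδ
    -- uniform continuity data
    obtain ⟨ε1, hε1, hg_unif⟩ := unif_eps isCompact_Icc (hg_cont.mono hIccJ) hδ
    obtain ⟨ε2, hε2, hf_unif⟩ := unif_eps isCompact_Icc hf_contIcc hε1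
    -- choose the mesh
    obtain ⟨n, hn1, hw_le⟩ : ∃ n : ℕ, 1 ≤ n ∧ (M' - m') / n ≤ ε2 := by
      refine ⟨max 1 ⌈(M' - m') / ε2⌉₊, le_max_left _ _, ?_⟩
      have h1 : (M' - m') / ε2 ≤ (⌈(M' - m') / ε2⌉₊ : ℝ) := Nat.le_ceil _
      have h2 : ((⌈(M' - m') / ε2⌉₊ : ℕ) : ℝ) ≤ ((max 1 ⌈(M' - m') / ε2⌉₊ : ℕ) : ℝ) := by
        exact_mod_cast le_max_right 1 _
      rw [div_le_iff₀ (by exact_mod_cast Nat.lt_of_lt_of_le Nat.zero_lt_one (le_max_left 1 _))]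
      rw [div_le_iff₀ hε2] at h1
      nlinarith [hε2]
    set w : ℝ := (M' - m') / n with hw_def
    have hnpos : (0:ℝ) < n := by exact_mod_cast Nat.lt_of_lt_of_le Nat.zero_lt_one hn1
    have hw : 0 < w := div_pos (by linarith) hnpos
    have hMn' : m' + n * w = M' := by rw [hw_def]; field_simp; ring
    set tt : ℕ → ℝ := fun i => m' + i * w with htt_def
    have htt_mem : ∀ i, i ≤ n → tt i ∈ Set.Icc m' M' := by
      intro i hi
      constructor
      · have : (0:ℝ) ≤ i * w := by positivity
        simp only [htt_def]; linarith
      · rw [← hMn']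
        simp only [htt_def, add_le_add_iff_left]
        exact mul_le_mul_of_nonneg_right (by exact_mod_cast hi) hw.le
    set E : ℕ → ℝ → ℝ := fun i => hatE m' w n i with hE_def
    have hE_cont : ∀ i, Continuous (E i) := fun i => hatE_continuous m' w n i
    have hE_nonneg : ∀ i t, 0 ≤ E i t := fun i t => hatE_nonneg m' w hw n i t
    set u : ℕ → B := fun i => cfc (E i) b with hu_def
    set v : ℕ → B := fun i => cfc (fun t => Real.sqrt (E i t)) b with hv_def
    have hv_cont : ∀ i, Continuous (fun t => Real.sqrt (E i t)) := fun i =>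
      Real.continuous_sqrt.comp (hE_cont i)
    have hu_nonneg : ∀ i, 0 ≤ u i := fun i => cfc_nonneg (fun t _ => hE_nonneg i t)
    have hv_sa : ∀ i, IsSelfAdjoint (v i) := fun i => cfc_predicate _ b
    have hv_sq : ∀ i, v i * v i = u i := by
      intro i
      rw [hv_def, hu_def, ← cfc_mul _ _ b (hv_cont i).continuousOn (hv_cont i).continuousOn]
      exact cfc_congr fun t _ => Real.mul_self_sqrt (hE_nonneg i t)
    have hu_sum : ∑ i ∈ Finset.range (n+1), u i = 1 := by
      rw [hu_def, ← cfc_sum _ b _ (fun i _ => (hE_cont i).continuousOn)]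
      have h1 : (∑ i ∈ Finset.range (n+1), E i) = fun t => ∑ i ∈ Finset.range (n+1), E i t := by
        funext t; simp [Finset.sum_apply]
      rw [h1]
      calc cfc (fun t => ∑ i ∈ Finset.range (n+1), E i t) b
          = cfc (fun _ : ℝ => (1:ℝ)) b := cfc_congr fun t _ => hatE_sum m' w n t
        _ = 1 := by rw [cfc_const 1 b hb_sa, map_one]
    have hτvxv : ∀ i (x : B), τ (v i * x * v i) = τ (u i * x) := by
      intro i x
      calc τ (v i * x * v i) = τ (v i * (v i * x)) := hτ_tracial _ _
        _ = τ (u i * x) := by rw [← mul_assoc, hv_sq]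
    have hconj : ∀ i (x y : B), x ≤ y → v i * x * v i ≤ v i * y * v i := by
      intro i x y hxy
      have h1 := star_left_conjugate_le_conjugate hxy (v i)
      rwa [(hv_sa i).star_eq] at h1
    have hconj_alg : ∀ i (r : ℝ), v i * (algebraMap ℝ B r) * v i = r • u i := by
      intro i r
      rw [Algebra.algebraMap_eq_smul_one, mul_smul_comm, mul_one, smul_mul_assoc, hv_sq]
    have hTsmul : ∀ (r : ℝ) (x : B), (τ (r • x)).re = r * (τ x).re := fun r x => by
      rw [hτ_real_smul, Complex.re_ofReal_mul]
    have hvxv_cfc : ∀ i (k : ℝ → ℝ), ContinuousOn k (spectrum ℝ b) →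
        v i * cfc k b * v i = cfc (fun t => E i t * k t) b := by
      intro i k hk
      have hmul1 : ContinuousOn (fun t => Real.sqrt (E i t) * k t) (spectrum ℝ b) :=
        (hv_cont i).continuousOn.mul hk
      rw [hv_def, ← cfc_mul _ _ b (hv_cont i).continuousOn hk, ← cfc_mul _ _ b hmul1
        (hv_cont i).continuousOn]
      refine cfc_congr fun t _ => ?_
      calc Real.sqrt (E i t) * k t * Real.sqrt (E i t)
          = Real.sqrt (E i t) * Real.sqrt (E i t) * k t := by ring
        _ = E i t * k t := by rw [Real.mul_self_sqrt (hE_nonneg i t)]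
    have hvbv : ∀ i, v i * b * v i = cfc (fun t => E i t * t) b := by
      intro i
      have h1 := hvxv_cfc i (fun t => t) continuousOn_id
      rwa [cfc_id' ℝ b hb_sa] at h1
    have hsupp' : ∀ i, i ≤ n → ∀ t ∈ spectrum ℝ b, E i t ≠ 0 → |t - tt i| ≤ w := by
      intro i hi t ht h0
      exact hatE_support m' w hw n hn1 i hi t (hσb ht).1 (by rw [hMn']; exact (hσb ht).2) h0
    have hvbv_ub : ∀ i, i ≤ n → v i * b * v i ≤ (tt i + w) • u i := by
      intro i hi
      rw [hvbv i, hu_def, ← cfc_const_mul (tt i + w) (E i) b (hE_cont i).continuousOn]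
      refine cfc_mono (fun t ht => ?_) ((hE_cont i).continuousOn.mul continuousOn_id)
        (continuousOn_const.mul (hE_cont i).continuousOn)
      rcases eq_or_ne (E i t) 0 with h0 | h0
      · simp [h0]
      · have h1 := (abs_le.mp (hsupp' i hi t ht h0)).2
        have h2 := hE_nonneg i t
        nlinarith
    have hvbv_lb : ∀ i, i ≤ n → (tt i - w) • u i ≤ v i * b * v i := by
      intro i hi
      rw [hvbv i, hu_def, ← cfc_const_mul (tt i - w) (E i) b (hE_cont i).continuousOn]
      refine cfc_mono (fun t ht => ?_) (continuousOn_const.mul (hE_cont i).continuousOn)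
        ((hE_cont i).continuousOn.mul continuousOn_id)
      rcases eq_or_ne (E i t) 0 with h0 | h0
      · simp [h0]
      · have h1 := (abs_le.mp (hsupp' i hi t ht h0)).1
        have h2 := hE_nonneg i t
        nlinarith
    -- global approximation step
    have hgf_contσb : ContinuousOn (fun t => g (f t)) (spectrum ℝ b) := by
      refine ContinuousOn.comp hgfσb hfσb ?_
      exact (spectrum ℝ b).mapsTo_image f
    have hcontsum : ContinuousOn (fun t => ∑ i ∈ Finset.range (n+1), g (f (tt i)) * E i t)
        (spectrum ℝ b) :=
      (continuous_finset_sum _ fun i _ => continuous_const.mul (hE_cont i)).continuousOn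
    have heq : cfc (fun t => (∑ i ∈ Finset.range (n+1), g (f (tt i)) * E i t) + δ) b
        = (∑ i ∈ Finset.range (n+1), g (f (tt i)) • u i) + δ • 1 := by
      rw [cfc_add_const δ _ b hcontsum hb_sa]
      congr 1
      · have h1 : (fun t => ∑ i ∈ Finset.range (n+1), g (f (tt i)) * E i t)
            = ∑ i ∈ Finset.range (n+1), (fun t => g (f (tt i)) * E i t) := by
          funext t; simp [Finset.sum_apply]
        rw [h1, cfc_sum (fun i t => g (f (tt i)) * E i t) b _ (fun i _ => (continuous_const.mul (hE_cont i)).continuousOn)]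
        exact Finset.sum_congr rfl fun i _ =>
          cfc_const_mul _ _ b (hE_cont i).continuousOn
      · rw [Algebra.algebraMap_eq_smul_one]
    have step1 : cfc (fun t => g (f t)) b
        ≤ (∑ i ∈ Finset.range (n+1), g (f (tt i)) • u i) + δ • 1 := by
      rw [← heq]
      refine cfc_mono (fun t ht => ?_) hgf_contσb (hcontsum.add continuousOn_const)
      have htI := hσb ht
      have hsum1 : ∑ i ∈ Finset.range (n+1), E i t = 1 := hatE_sum m' w n t
      have termwise : ∀ i ∈ Finset.range (n+1),
          g (f t) * E i t ≤ (g (f (tt i)) + δ) * E i t := by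
        intro i hi
        have hin : i ≤ n := Nat.lt_succ_iff.mp (Finset.mem_range.mp hi)
        rcases eq_or_ne (E i t) 0 with h0 | h0
        · simp [h0]
        · have h1 : |t - tt i| ≤ ε2 := le_trans (hsupp' i hin t ht h0) hw_le
          have h2 : |f t - f (tt i)| ≤ ε1 := hf_unif t htI (tt i) (htt_mem i hin) h1
          have h3 : |g (f t) - g (f (tt i))| ≤ δ :=
            hg_unif (f t) (hf_mem t htI) (f (tt i)) (hf_mem _ (htt_mem i hin)) h2
          have h4 := (abs_le.mp h3).2
          exact mul_le_mul_of_nonneg_right (by linarith) (hE_nonneg i t)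
      calc g (f t) = ∑ i ∈ Finset.range (n+1), g (f t) * E i t := by
            rw [← Finset.mul_sum, hsum1, mul_one]
        _ ≤ ∑ i ∈ Finset.range (n+1), (g (f (tt i)) + δ) * E i t :=
            Finset.sum_le_sum termwise
        _ = (∑ i ∈ Finset.range (n+1), g (f (tt i)) * E i t) + δ * ∑ i ∈ Finset.range (n+1), E i t := by
            rw [Finset.mul_sum, ← Finset.sum_add_distrib]
            exact Finset.sum_congr rfl fun i _ => by ring
        _ = (∑ i ∈ Finset.range (n+1), g (f (tt i)) * E i t) + δ := by rw [hsum1, mul_one]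
    have global : (τ (cfc (fun t => g (f t)) b)).re
        ≤ (∑ i ∈ Finset.range (n+1), g (f (tt i)) * (τ (u i)).re) + δ := by
      have h1 := hτ_mono step1
      rw [map_add, map_sum, Complex.add_re, Complex.re_sum] at h1
      have h2 : (τ (δ • (1:B))).re = δ := by rw [hTsmul, hτ_unital, Complex.one_re, mul_one]
      have h3 : ∀ i ∈ Finset.range (n+1),
          (τ (g (f (tt i)) • u i)).re = g (f (tt i)) * (τ (u i)).re := fun i _ => hTsmul _ _
      rw [Finset.sum_congr rfl h3, h2] at h1
      exact h1
    -- per-index estimate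
    have key_index : ∀ i ∈ Finset.range (n+1), g (f (tt i)) * (τ (u i)).re
        ≤ (τ (v i * G * v i)).re + δ * (τ (u i)).re := by
      intro i hi
      have hin : i ≤ n := Nat.lt_succ_iff.mp (Finset.mem_range.mp hi)
      have hτu := hτ_pos (u i) (hu_nonneg i)
      have hTu_nonneg : 0 ≤ (τ (u i)).re := by
        have := (Complex.le_def.mp hτu).1; simpa using this
      have hτu_im : (τ (u i)).im = 0 := by
        have := (Complex.le_def.mp hτu).2; simpa using this.symm
      set Tu : ℝ := (τ (u i)).re with hTu_def
      have hτu_eq : τ (u i) = (Tu : ℂ) := Complex.ext (by simp [hTu_def]) (by simp [hτu_im])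
      have hG_lbd : -(‖G‖ • u i) ≤ v i * G * v i := by
        have h1 := hconj i _ _ hG_sa.neg_algebraMap_norm_le_self
        rwa [mul_neg, neg_mul, hconj_alg] at h1
      rcases eq_or_lt_of_le hTu_nonneg with hTu0 | hTupos
      · have h2 : 0 ≤ (τ (v i * G * v i)).re := by
          have h3 := hτ_mono hG_lbd
          rw [map_neg, Complex.neg_re, hTsmul] at h3
          rw [← hTu_def, ← hTu0, mul_zero, neg_zero] at h3
          exact h3
        rw [← hTu0, mul_zero, mul_zero, add_zero]
        exact h2
      · have hTu_ne : (Tu : ℂ) ≠ 0 := by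
          exact_mod_cast ne_of_gt hTupos
        set ν : B →ₗ[ℂ] ℂ :=
          ((Tu : ℂ))⁻¹ • (τ ∘ₗ (LinearMap.mulRight ℂ (v i) ∘ₗ LinearMap.mulLeft ℂ (v i)))
          with hν_def
        have hν_apply : ∀ x : B, ν x = (Tu : ℂ)⁻¹ * τ (v i * x * v i) := by
          intro x
          simp [hν_def, LinearMap.mulRight_apply, LinearMap.mulLeft_apply, smul_eq_mul]
        have hν_re : ∀ x : B, (ν x).re = Tu⁻¹ * (τ (v i * x * v i)).re := by
          intro x; rw [hν_apply, ← Complex.ofReal_inv, Complex.re_ofReal_mul]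
        have hν_pos : ∀ x : B, 0 ≤ x → 0 ≤ ν x := by
          intro x hx
          have h1 : 0 ≤ v i * x * v i := by
            have h2 := star_left_conjugate_nonneg hx (v i)
            rwa [(hv_sa i).star_eq] at h2
          rw [hν_apply, ← Complex.ofReal_inv]
          exact real_mul_nonneg (by positivity) (hτ_pos _ h1)
        have hν_unital : ν 1 = 1 := by
          rw [hν_apply, mul_one, hv_sq, hτu_eq, inv_mul_cancel₀ hTu_ne]
        have hνφ_pos : ∀ x : A, 0 ≤ x → 0 ≤ (ν ∘ₗ φ) x := fun x hx => hν_pos _ (hφ_pos x hx)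
        have hνφ_unital : (ν ∘ₗ φ) 1 = 1 := by
          rw [LinearMap.comp_apply, hφ_unital, hν_unital]
        obtain ⟨hs_mem, hs_jensen⟩ := jensen_state (ν ∘ₗ φ) hνφ_pos hνφ_unital hI_open hI_conn
          hf hf_cont ha hm'I hM'I hσa_sub
        obtain ⟨hr_mem, hr_jensen⟩ := jensen_state ν hν_pos hν_unital hJ_open hJ_conn
          hg_conv hg_cont hc_sa hpJ hqJ hσc
        set s : ℝ := ((ν ∘ₗ φ) a).re with hs_def
        have hs_eq : s = Tu⁻¹ * (τ (v i * b * v i)).re := by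
          rw [hs_def, LinearMap.comp_apply, ← hb_def, hν_re]
        have hfs_le_r : f s ≤ (ν c).re := by
          have h1 : (ν ∘ₗ φ) (cfc f a) = ν c := by
            rw [LinearMap.comp_apply, ← hx₁_def, ← hc_def]
          rw [← h1]
          exact hs_jensen
        -- |s - tt i| ≤ w
        have hTvbv_ub := hτ_mono (hvbv_ub i hin)
        have hTvbv_lb := hτ_mono (hvbv_lb i hin)
        rw [hTsmul, ← hTu_def] at hTvbv_ub
        rw [hTsmul, ← hTu_def] at hTvbv_lb
        have hs_ub : s ≤ tt i + w := by
          rw [hs_eq]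
          have h1 := mul_le_mul_of_nonneg_left hTvbv_ub (inv_nonneg.mpr hTupos.le)
          have h2 : Tu⁻¹ * ((tt i + w) * Tu) = tt i + w := by field_simp
          linarith
        have hs_lb : tt i - w ≤ s := by
          rw [hs_eq]
          have h1 := mul_le_mul_of_nonneg_left hTvbv_lb (inv_nonneg.mpr hTupos.le)
          have h2 : Tu⁻¹ * ((tt i - w) * Tu) = tt i - w := by field_simp
          linarith
        have hs_tt : |tt i - s| ≤ ε2 := by
          rw [abs_le]
          constructor <;> [linarith [hw_le]; linarith [hw_le]]
        have hfs_close : |f (tt i) - f s| ≤ ε1 :=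
          hf_unif (tt i) (htt_mem i hin) s hs_mem hs_tt
        have hgf_close : |g (f (tt i)) - g (f s)| ≤ δ :=
          hg_unif (f (tt i)) (hf_mem _ (htt_mem i hin)) (f s) (hf_mem _ hs_mem) hfs_close
        have hmono_g : g (f s) ≤ g ((ν c).re) :=
          hg_mono (hfI ⟨s, hIccI hs_mem, rfl⟩) (hIccJ hr_mem) hfs_le_r
        have hchain : g (f (tt i)) ≤ (ν G).re + δ := by
          have h4 := (abs_le.mp hgf_close).2
          have h5 : g ((ν c).re) ≤ (ν G).re := hr_jensen
          linarith
        have hνG : (ν G).re * Tu = (τ (v i * G * v i)).re := by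
          rw [hν_re]
          field_simp
        calc g (f (tt i)) * Tu ≤ ((ν G).re + δ) * Tu :=
              mul_le_mul_of_nonneg_right hchain hTu_nonneg
          _ = (τ (v i * G * v i)).re + δ * Tu := by rw [add_mul, hνG]
    -- sum everything up
    have sum_vGv : ∑ i ∈ Finset.range (n+1), (τ (v i * G * v i)).re = (τ G).re := by
      have h1 : ∀ i ∈ Finset.range (n+1), (τ (v i * G * v i)).re = (τ (u i * G)).re :=
        fun i _ => by rw [hτvxv]
      rw [Finset.sum_congr rfl h1, ← Complex.re_sum, ← map_sum, ← Finset.sum_mul, hu_sum,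
        one_mul]
    have sum_Tu : ∑ i ∈ Finset.range (n+1), (τ (u i)).re = 1 := by
      rw [← Complex.re_sum, ← map_sum, hu_sum, hτ_unital, Complex.one_re]
    calc (τ (cfc (fun t => g (f t)) b)).re
        ≤ (∑ i ∈ Finset.range (n+1), g (f (tt i)) * (τ (u i)).re) + δ := global
      _ ≤ (∑ i ∈ Finset.range (n+1),
            ((τ (v i * G * v i)).re + δ * (τ (u i)).re)) + δ :=
          add_le_add_left (Finset.sum_le_sum key_index) δ
      _ = (τ G).re + δ * 1 + δ := by
          rw [Finset.sum_add_distrib, sum_vGv, ← Finset.mul_sum, sum_Tu]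
      _ ≤ (τ G).re + 2*δ := by linarith
  by_contra hcon
  push_neg at hcon
  have h3 : 0 < ((τ (cfc (fun t => g (f t)) b)).re - (τ G).re)/3 := by linarith
  have := key _ h3
  linarith
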